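/- (Interlacing-type inequality) Let A be an M_R × M complex matrix with singular values σ₁ ≤ ... ≤ σ_M, and let B be the submatrix consisting of the last M−i+1 columns of AV where V is the right-singular-vector matrix of A (ordered by nondecreasing singular value). Then det(I + c·B*B) = ∏_{k=i}^{M}(1 + c·σₖ²), and for any other M × (M−i+1) matrix P with orthonormal columns, det(I + c·(AP)*(AP)) ≤ ∏_{k=i}^{M}(1 + c·σₖ²). -/

import Mathlib

set_option maxHeartbeats 1600000

open Matrix

/-- Columns `i, i+1, ..., M-1` (0-indexed) of `B`, i.e. the last `M - i`
columns. -/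
def tailCols (M_R M : ℕ) (B : Matrix (Fin M_R) (Fin M) ℂ) (i : ℕ) :
    Matrix (Fin M_R) (Fin (M - i)) ℂ :=
  fun r k => B r ⟨i + (k : ℕ), by omega⟩

section CauchyBinet
open Equiv Equiv.Perm Finset Function Matrix

variable {R : Type*} [CommRing R] {n M : ℕ}

local notation "ε " σ:arg => ((sign σ : ℤ) : R)

theorem cb_aux {A : Matrix (Fin n) (Fin M) R} {B : Matrix (Fin M) (Fin n) R}
    {p : Fin n → Fin M} (H : ¬Injective p) :
    (∑ σ : Perm (Fin n), ε σ * ∏ x, A (σ x) (p x) * B (p x) x) = 0 := by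
  obtain ⟨i, j, hpij, hij⟩ : ∃ i j, p i = p j ∧ i ≠ j := by
    rw [Injective] at H
    push_neg at H
    exact H
  exact
    sum_involution (fun σ _ => σ * Equiv.swap i j)
      (fun σ _ => by
        have : (∏ x, A (σ x) (p x)) = ∏ x, A ((σ * Equiv.swap i j) x) (p x) :=
          Fintype.prod_equiv (swap i j) _ _ (by simp [apply_swap_eq_self hpij])
        simp [this, sign_swap hij, -sign_swap', prod_mul_distrib])
      (fun σ _ _ => (not_congr mul_swap_eq_iff).mpr hij) (fun _ _ => mem_univ _) fun σ _ =>
      mul_swap_involutive i j σ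

theorem sum_perm_eq_det_mul (A B : Matrix (Fin n) (Fin n) R) :
    ∑ τ : Perm (Fin n), ∑ σ : Perm (Fin n), ε σ * ∏ i, A (σ i) (τ i) * B (τ i) i =
      det A * det B :=
  calc
    ∑ τ : Perm (Fin n), ∑ σ : Perm (Fin n), ε σ * ∏ i, A (σ i) (τ i) * B (τ i) i
    _ = ∑ σ : Perm (Fin n), ∑ τ : Perm (Fin n),
        (∏ i, B (σ i) i) * ε τ * ∏ j, A (τ j) (σ j) := by
      simp only [mul_comm, mul_left_comm, prod_mul_distrib, mul_assoc]
    _ = ∑ σ : Perm (Fin n), ∑ τ : Perm (Fin n),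
        (∏ i, B (σ i) i) * (ε σ * ε τ) * ∏ i, A (τ i) i :=
      (sum_congr rfl fun σ _ =>
        Fintype.sum_equiv (Equiv.mulRight σ⁻¹) _ _ fun τ => by
          have : (∏ j, A (τ j) (σ j)) = ∏ j, A ((τ * σ⁻¹) j) j := by
            rw [← (σ⁻¹ : _ ≃ _).prod_comp]
            simp only [Equiv.Perm.coe_mul, Equiv.Perm.inv_def, Equiv.apply_symm_apply, Function.comp_apply]
          have h : ε σ * ε (τ * σ⁻¹) = ε τ :=
            calc
              ε σ * ε (τ * σ⁻¹) = ε (τ * σ⁻¹ * σ) := by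
                rw [mul_comm, sign_mul (τ * σ⁻¹)]
                simp only [Int.cast_mul, Units.val_mul]
              _ = ε τ := by simp only [inv_mul_cancel_right]
          simp_rw [Equiv.coe_mulRight, h]
          simp only [this])
    _ = det A * det B := by
      simp only [det_apply', Finset.mul_sum, mul_comm, mul_left_comm, mul_assoc]

lemma image_orderEmbOfFin (s : Finset (Fin M)) (h : s.card = n) :
    Finset.image (s.orderEmbOfFin h) Finset.univ = s :=
  Finset.coe_injective (by
    rw [coe_image, coe_univ, Set.image_univ, Finset.range_orderEmbOfFin])

theorem cauchyBinet (A : Matrix (Fin n) (Fin M) R) (B : Matrix (Fin M) (Fin n) R) :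
    det (A * B) = ∑ s ∈ (Finset.univ.powersetCard n).attach,
      det (A.submatrix id (s.1.orderEmbOfFin (Finset.mem_powersetCard_univ.mp s.2))) *
      det (B.submatrix (s.1.orderEmbOfFin (Finset.mem_powersetCard_univ.mp s.2)) id) := by
  have step1 : det (A * B) = ∑ p : Fin n → Fin M, ∑ σ : Perm (Fin n),
      ε σ * ∏ i, A (σ i) (p i) * B (p i) i := by
    simp only [det_apply', Matrix.mul_apply, prod_univ_sum, mul_sum, Fintype.piFinset_univ]
    rw [Finset.sum_comm]
  have step2 : (∑ p : Fin n → Fin M, ∑ σ : Perm (Fin n),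
      ε σ * ∏ i, A (σ i) (p i) * B (p i) i) =
      ∑ p ∈ Finset.univ.filter (fun p : Fin n → Fin M => Injective p), ∑ σ : Perm (Fin n),
        ε σ * ∏ i, A (σ i) (p i) * B (p i) i := by
    refine (sum_subset (filter_subset _ _) fun f _ hinj ↦ cb_aux ?_).symm
    simpa only [true_and, mem_filter, mem_univ] using hinj
  have step3 : (∑ p ∈ Finset.univ.filter (fun p : Fin n → Fin M => Injective p),
        ∑ σ : Perm (Fin n), ε σ * ∏ i, A (σ i) (p i) * B (p i) i) =
      ∑ x ∈ ((Finset.univ.powersetCard n).attach ×ˢ (Finset.univ : Finset (Perm (Fin n)))),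
        ∑ σ : Perm (Fin n), ε σ * ∏ i,
          A (σ i) ((x.1.1.orderEmbOfFin (Finset.mem_powersetCard_univ.mp x.1.2)) (x.2 i)) *
          B ((x.1.1.orderEmbOfFin (Finset.mem_powersetCard_univ.mp x.1.2)) (x.2 i)) i := by
    symm
    refine Finset.sum_bij
      (fun x _ => (x.1.1.orderEmbOfFin (Finset.mem_powersetCard_univ.mp x.1.2)) ∘ x.2)
      ?_ ?_ ?_ (fun x hx => rfl)
    · intro x _
      simp only [mem_filter, mem_univ, true_and]
      exact (x.1.1.orderEmbOfFin _).injective.comp x.2.injective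
    · intro x₁ _ x₂ _ h
      obtain ⟨⟨s₁, hs₁⟩, τ₁⟩ := x₁
      obtain ⟨⟨s₂, hs₂⟩, τ₂⟩ := x₂
      have him : s₁ = s₂ := by
        have h1 := congrArg (fun p => Finset.image p Finset.univ) h
        simp only [← Finset.image_image,
          Finset.image_univ_of_surjective τ₁.surjective,
          Finset.image_univ_of_surjective τ₂.surjective,
          image_orderEmbOfFin] at h1
        exact h1
      subst him
      have hτ : τ₁ = τ₂ := by
        apply Equiv.ext
        intro a
        exact (s₁.orderEmbOfFin (Finset.mem_powersetCard_univ.mp hs₁)).injective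
          (congrFun h a)
      simp [hτ]
    · intro p hp
      have hpinj : Injective p := by simpa using (mem_filter.mp hp).2
      set s : Finset (Fin M) := Finset.image p Finset.univ with hs
      have hcard : s.card = n := by
        rw [hs, Finset.card_image_of_injective _ hpinj, card_univ, Fintype.card_fin]
      have hmem : ∀ a : Fin n, p a ∈ s := fun a => Finset.mem_image_of_mem p (mem_univ a)
      set f : Fin n → Fin n := fun a => (s.orderIsoOfFin hcard).symm ⟨p a, hmem a⟩ with hf
      have hfinj : Injective f := by
        intro a b hab
        simp only [hf] at hab
        have h2 : (⟨p a, hmem a⟩ : {x // x ∈ s}) = ⟨p b, hmem b⟩ :=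
          (s.orderIsoOfFin hcard).symm.injective hab
        exact hpinj (by simpa using h2)
      refine ⟨⟨⟨s, Finset.mem_powersetCard_univ.mpr hcard⟩,
        Equiv.ofBijective f ((Fintype.bijective_iff_injective_and_card f).mpr
          ⟨hfinj, rfl⟩)⟩, Finset.mem_product.mpr ⟨Finset.mem_attach _ _, mem_univ _⟩, ?_⟩
    -- show emb ∘ f = p
      funext a
      show (s.orderEmbOfFin hcard) (f a) = p a
      rw [← Finset.coe_orderIsoOfFin_apply, hf]
      simp
  rw [step1, step2, step3, Finset.sum_product]
  refine Finset.sum_congr rfl fun s _ => ?_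
  have h5 := sum_perm_eq_det_mul
    (A.submatrix id (s.1.orderEmbOfFin (Finset.mem_powersetCard_univ.mp s.2)))
    (B.submatrix (s.1.orderEmbOfFin (Finset.mem_powersetCard_univ.mp s.2)) id)
  simp only [Matrix.submatrix_apply, id_eq] at h5
  exact h5

end CauchyBinet

theorem det_gram (n M : ℕ) (d : Fin M → ℝ) (hd : ∀ k, 0 ≤ d k)
    (Q : Matrix (Fin M) (Fin n) ℂ) :
    (Qᴴ * Matrix.diagonal (fun k => ((d k : ℝ) : ℂ)) * Q).det =
    ((∑ s ∈ (Finset.univ.powersetCard n).attach,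
      (∏ k ∈ s.1, d k) *
        Complex.normSq ((Q.submatrix (s.1.orderEmbOfFin
          (Finset.mem_powersetCard_univ.mp s.2)) id).det) : ℝ) : ℂ) := by
  set r : Fin M → ℝ := fun k => Real.sqrt (d k) with hr
  set W : Matrix (Fin M) (Fin n) ℂ := Matrix.diagonal (fun k => ((r k : ℝ) : ℂ)) * Q with hW
  have hdd : Matrix.diagonal (star fun k => ((r k : ℝ) : ℂ)) *
      Matrix.diagonal (fun k => ((r k : ℝ) : ℂ)) =
      Matrix.diagonal (fun k => ((d k : ℝ) : ℂ)) := by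
    rw [Matrix.diagonal_mul_diagonal]
    apply congrArg Matrix.diagonal
    funext k
    simp only [Pi.star_apply, RCLike.star_def, Complex.conj_ofReal, hr]
    rw [← Complex.ofReal_mul, Real.mul_self_sqrt (hd k)]
  have hWHW : Qᴴ * Matrix.diagonal (fun k => ((d k : ℝ) : ℂ)) * Q = Wᴴ * W := by
    rw [hW, Matrix.conjTranspose_mul, Matrix.diagonal_conjTranspose]
    simp only [Matrix.mul_assoc]
    rw [← Matrix.mul_assoc (Matrix.diagonal _) (Matrix.diagonal _) Q, hdd]
  rw [hWHW, cauchyBinet]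
  push_cast
  refine Finset.sum_congr rfl fun s _ => ?_
  have hcard := Finset.mem_powersetCard_univ.mp s.2
  have hsub : W.submatrix (s.1.orderEmbOfFin hcard) id =
      Matrix.diagonal (fun a => ((r (s.1.orderEmbOfFin hcard a) : ℝ) : ℂ)) *
        Q.submatrix (s.1.orderEmbOfFin hcard) id := by
    ext a b
    simp [hW, Matrix.mul_apply, Matrix.diagonal_apply, Finset.sum_ite_eq]
  have h1 : Wᴴ.submatrix id (s.1.orderEmbOfFin hcard) =
      (W.submatrix (s.1.orderEmbOfFin hcard) id)ᴴ := by
    rw [← Matrix.conjTranspose_submatrix]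
  rw [h1, Matrix.det_conjTranspose, hsub, Matrix.det_mul, Matrix.det_diagonal]
  set z := (Q.submatrix (s.1.orderEmbOfFin hcard) id).det with hz
  set P := ∏ a : Fin n, ((r (s.1.orderEmbOfFin hcard a) : ℝ) : ℂ) with hP
  have hstarP : star P = P := by
    rw [hP, star_prod]
    exact Finset.prod_congr rfl fun a _ => by
      simp [RCLike.star_def, Complex.conj_ofReal]
  have hprod : P * P = ((∏ k ∈ s.1, d k : ℝ) : ℂ) := by
    have hps : (∏ k ∈ s.1, d k) = ∏ a : Fin n, d (s.1.orderEmbOfFin hcard a) := by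
      conv_lhs => rw [← image_orderEmbOfFin s.1 hcard]
      rw [Finset.prod_image (fun x _ y _ h => (s.1.orderEmbOfFin hcard).injective h)]
    rw [hps, hP, ← Finset.prod_mul_distrib]
    push_cast
    refine Finset.prod_congr rfl fun a _ => ?_
    rw [← Complex.ofReal_mul, Real.mul_self_sqrt (hd _)]
  calc star (P * z) * (P * z) = (P * P) * (star z * z) := by
        rw [star_mul', hstarP]; ring
    _ = (∏ i ∈ s.1, ((d i : ℝ) : ℂ)) * ((Complex.normSq z : ℝ) : ℂ) := by
        rw [hprod, Complex.star_def, ← Complex.normSq_eq_conj_mul_self]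
        push_cast
        ring

lemma reindex_prod (M : ℕ) (i : Fin M) (f : Fin M → ℝ) :
    ∏ k ∈ Finset.univ.filter (fun k : Fin M => i ≤ k), f k =
    ∏ j : Fin (M - (i : ℕ)), f ⟨(i : ℕ) + (j : ℕ), by omega⟩ := by
  refine Finset.prod_nbij' (fun k => (⟨(k : ℕ) - (i : ℕ), by omega⟩ : Fin (M - (i : ℕ))))
    (fun j => (⟨(i : ℕ) + (j : ℕ), by omega⟩ : Fin M)) ?_ ?_ ?_ ?_ ?_
  · intro a _; exact Finset.mem_univ _
  · intro j _
    simp only [Finset.mem_filter, Finset.mem_univ, true_and]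
    rw [Fin.le_def]; simp
  · intro a ha
    have hia : (i : ℕ) ≤ (a : ℕ) := by
      have := (Finset.mem_filter.mp ha).2
      rwa [Fin.le_def] at this
    apply Fin.ext; simp; omega
  · intro j _
    apply Fin.ext; simp
  · intro a ha
    have hia : (i : ℕ) ≤ (a : ℕ) := by
      have := (Finset.mem_filter.mp ha).2
      rwa [Fin.le_def] at this
    congr 1
    apply Fin.ext; simp; omega

lemma filter_ge_card (M : ℕ) (i : Fin M) :
    (Finset.univ.filter (fun k : Fin M => i ≤ k)).card = M - (i : ℕ) := by
  have h := Finset.card_nbij'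
    (fun k : Fin M => (⟨(k : ℕ) - (i : ℕ), by have h2 := k.isLt; omega⟩ : Fin (M - (i : ℕ))))
    (fun j : Fin (M - (i : ℕ)) => (⟨(i : ℕ) + (j : ℕ), by have h2 := j.isLt; omega⟩ : Fin M))
    (s := Finset.univ.filter (fun k : Fin M => i ≤ k)) (t := Finset.univ) ?_ ?_ ?_ ?_
  · rw [h, Finset.card_univ, Fintype.card_fin]
  · intro a _; exact Finset.mem_univ _
  · intro j _
    simp only [Finset.mem_filter, Finset.mem_univ, true_and]
    rw [Finset.mem_coe, Finset.mem_filter, Fin.le_def]; simp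
  · intro a ha
    have hia : (i : ℕ) ≤ (a : ℕ) := by
      have := (Finset.mem_filter.mp ha).2
      rwa [Fin.le_def] at this
    apply Fin.ext; simp; omega
  · intro j _
    apply Fin.ext; simp

lemma prod_subset_le_top (M : ℕ) (i : Fin M) (x : Fin M → ℝ) (hx1 : ∀ k, 1 ≤ x k)
    (hmono : Monotone x) (s : Finset (Fin M)) (hs : s.card = M - (i : ℕ)) :
    ∏ k ∈ s, x k ≤ ∏ k ∈ Finset.univ.filter (fun k : Fin M => i ≤ k), x k := by
  classical
  set t := Finset.univ.filter (fun k : Fin M => i ≤ k) with ht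
  have hx0 : ∀ k, (0:ℝ) ≤ x k := fun k => le_trans zero_le_one (hx1 k)
  have hcards : (s \ t).card = (t \ s).card := by
    have h1 := Finset.card_sdiff_add_card_inter s t
    have h2 := Finset.card_sdiff_add_card_inter t s
    rw [Finset.inter_comm] at h2
    have ht' : t.card = M - (i : ℕ) := filter_ge_card M i
    omega
  have key : ∏ k ∈ s \ t, x k ≤ ∏ k ∈ t \ s, x k := by
    have e := Finset.equivOfCardEq hcards
    rw [← Finset.prod_coe_sort (s \ t) x, ← Finset.prod_coe_sort (t \ s) x]
    rw [← Equiv.prod_comp e (fun a => x a.1)]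
    refine Finset.prod_le_prod (fun a _ => hx0 _) (fun a _ => ?_)
    apply hmono
    have ha : a.1 ∈ s \ t := a.2
    have hb : (e a).1 ∈ t \ s := (e a).2
    have h1 : ¬ (i ≤ a.1) := by
      have := (Finset.mem_sdiff.mp ha).2
      simpa [ht] using this
    have h2 : i ≤ (e a).1 := by
      have := (Finset.mem_sdiff.mp hb).1
      simpa [ht] using this
    exact le_trans (le_of_not_ge h1) h2
  calc ∏ k ∈ s, x k = (∏ k ∈ s ∩ t, x k) * ∏ k ∈ s \ t, x k :=
        (Finset.prod_inter_mul_prod_diff s t x).symm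
    _ ≤ (∏ k ∈ s ∩ t, x k) * ∏ k ∈ t \ s, x k := by
        exact mul_le_mul_of_nonneg_left key (Finset.prod_nonneg fun k _ => hx0 k)
    _ = (∏ k ∈ t ∩ s, x k) * ∏ k ∈ t \ s, x k := by rw [Finset.inter_comm]
    _ = ∏ k ∈ t, x k := Finset.prod_inter_mul_prod_diff t s x


/-- Restricting the channel to the top right-singular subspace maximizes the
determinant capacity: the last `M - i` columns of `AV` achieve
`∏_{k ≥ i} (1 + c σₖ²)`, and any orthonormal `P` of the same size achieves no
more. -/
theorem top_singular_subspace_maximizes_det (M_R M : ℕ) (hM : M ≤ M_R)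
    (A : Matrix (Fin M_R) (Fin M) ℂ)
    (U : Matrix (Fin M_R) (Fin M) ℂ) (hU : Uᴴ * U = 1)
    (σ : Fin M → ℝ) (hσ0 : ∀ k, 0 ≤ σ k) (hσmono : Monotone σ)
    (V : Matrix (Fin M) (Fin M) ℂ) (hV : Vᴴ * V = 1)
    (hA : A = U * Matrix.diagonal (fun k => ((σ k : ℝ) : ℂ)) * Vᴴ)
    (c : ℝ) (hc : 0 < c) (i : Fin M) :
    ((1 + (c : ℂ) • ((tailCols M_R M (A * V) i)ᴴ *
        tailCols M_R M (A * V) i)).det.re =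
      ∏ k ∈ Finset.univ.filter (fun k : Fin M => i ≤ k), (1 + c * σ k ^ 2)) ∧
    ∀ P : Matrix (Fin M) (Fin (M - (i : ℕ))) ℂ, Pᴴ * P = 1 →
      (1 + (c : ℂ) • ((A * P)ᴴ * (A * P))).det.re ≤
        ∏ k ∈ Finset.univ.filter (fun k : Fin M => i ≤ k), (1 + c * σ k ^ 2) := by
  have hVV : V * Vᴴ = 1 := mul_eq_one_comm.mp hV
  have hentryU : ∀ a b : Fin M, (∑ r, star (U r a) * U r b) = if a = b then (1:ℂ) else 0 := by
    intro a b
    have h := congrFun (congrFun hU a) b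
    simpa [Matrix.mul_apply, Matrix.conjTranspose_apply, Matrix.one_apply] using h
  have hx1 : ∀ k, (1:ℝ) ≤ 1 + c * σ k ^ 2 := by
    intro k
    have := mul_nonneg hc.le (sq_nonneg (σ k))
    linarith
  have hxmono : Monotone (fun k => 1 + c * σ k ^ 2) := by
    intro a b hab
    have h1 : σ a ≤ σ b := hσmono hab
    have h2 : σ a ^ 2 ≤ σ b ^ 2 := by nlinarith [hσ0 a, hσ0 b]
    have := mul_le_mul_of_nonneg_left h2 hc.le
    simpa using this
  constructor
  · -- Part 1
    have hAV : A * V = U * Matrix.diagonal (fun k => ((σ k : ℝ) : ℂ)) := by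
      rw [hA, Matrix.mul_assoc (U * _) Vᴴ V, hV, Matrix.mul_one]
    set gi : Fin (M - (i : ℕ)) → Fin M :=
      fun k => ⟨(i : ℕ) + (k : ℕ), by have h1 := k.isLt; have h2 := i.isLt; omega⟩ with hgi
    have hgi_inj : Function.Injective gi := by
      intro a b hab
      apply Fin.ext
      have := congrArg (fun z : Fin M => (z : ℕ)) hab
      simpa [hgi] using this
    set B := tailCols M_R M (A * V) (i : ℕ) with hB
    have hBrk : ∀ (r : Fin M_R) (k : Fin (M - (i : ℕ))), B r k =
        U r (gi k) * ((σ (gi k) : ℝ) : ℂ) := by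
      intro r k
      show (A * V) r _ = _
      rw [hAV, Matrix.mul_diagonal]
    have hBmat : (1 : Matrix (Fin (M - (i:ℕ))) (Fin (M - (i:ℕ))) ℂ) + (c:ℂ) • (Bᴴ * B) =
        Matrix.diagonal (fun k : Fin (M - (i:ℕ)) => ((1 + c * σ (gi k) ^ 2 : ℝ) : ℂ)) := by
      ext k l
      rw [Matrix.add_apply, Matrix.smul_apply, Matrix.mul_apply]
      simp only [Matrix.conjTranspose_apply, hBrk]
      have hterm : ∀ r : Fin M_R,
          star (U r (gi k) * ((σ (gi k) : ℝ) : ℂ)) * (U r (gi l) * ((σ (gi l) : ℝ) : ℂ)) =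
          ((σ (gi k) : ℝ) : ℂ) * ((σ (gi l) : ℝ) : ℂ) * (star (U r (gi k)) * U r (gi l)) := by
        intro r
        rw [star_mul']
        rw [show star (((σ (gi k) : ℝ) : ℂ)) = ((σ (gi k) : ℝ) : ℂ) by
          simp [RCLike.star_def, Complex.conj_ofReal]]
        ring
      rw [Finset.sum_congr rfl (fun r _ => hterm r), ← Finset.mul_sum, hentryU]
      by_cases hkl : k = l
      · subst hkl
        rw [if_pos rfl, Matrix.diagonal_apply_eq, Matrix.one_apply_eq, smul_eq_mul]
        push_cast
        ring
      · rw [if_neg (fun hc' => hkl (hgi_inj hc')), Matrix.diagonal_apply_ne _ hkl,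
          Matrix.one_apply_ne hkl]
        simp
    rw [hBmat, Matrix.det_diagonal, ← Complex.ofReal_prod, Complex.ofReal_re]
    rw [reindex_prod M i (fun k => 1 + c * σ k ^ 2)]
  · -- Part 2
    intro P hP
    set Q := Vᴴ * P with hQ
    have hQQ : Qᴴ * Q = 1 := by
      rw [hQ, Matrix.conjTranspose_mul, Matrix.conjTranspose_conjTranspose,
        Matrix.mul_assoc, ← Matrix.mul_assoc V Vᴴ P, hVV, Matrix.one_mul, hP]
    set x : Fin M → ℝ := fun k => 1 + c * σ k ^ 2 with hxdef
    have hx0 : ∀ k, (0:ℝ) ≤ x k := fun k => le_trans zero_le_one (hx1 k)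
    have hmain : (1 : Matrix (Fin (M - (i : ℕ))) (Fin (M - (i : ℕ))) ℂ) + (c:ℂ) • ((A * P)ᴴ * (A * P)) =
        Qᴴ * Matrix.diagonal (fun k => ((x k : ℝ) : ℂ)) * Q := by
      have hAA : (A * P)ᴴ * (A * P) =
          Qᴴ * Matrix.diagonal (fun k => ((σ k ^ 2 : ℝ) : ℂ)) * Q := by
        rw [hA, hQ]
        simp only [Matrix.conjTranspose_mul, Matrix.conjTranspose_conjTranspose,
          Matrix.diagonal_conjTranspose, Matrix.mul_assoc]
        rw [show star (fun k => ((σ k : ℝ) : ℂ)) = fun k => ((σ k : ℝ) : ℂ) by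
          funext k; simp [Pi.star_apply, RCLike.star_def, Complex.conj_ofReal]]
        rw [← Matrix.mul_assoc Uᴴ U _, hU, Matrix.one_mul]
        rw [← Matrix.mul_assoc (Matrix.diagonal _) (Matrix.diagonal _) _,
          Matrix.diagonal_mul_diagonal]
        congr 2
        congr 1
        exact congrArg Matrix.diagonal (funext fun k => by push_cast; ring)
      rw [hAA]
      have hsplit : Matrix.diagonal (fun k : Fin M => ((x k : ℝ) : ℂ)) =
          (1 : Matrix (Fin M) (Fin M) ℂ) +
            (c:ℂ) • Matrix.diagonal (fun k => ((σ k ^ 2 : ℝ) : ℂ)) := by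
        rw [← Matrix.diagonal_one, ← Matrix.diagonal_smul, Matrix.diagonal_add]
        exact congrArg Matrix.diagonal (funext fun k => by
          simp only [Pi.add_apply, Pi.smul_apply, smul_eq_mul, hxdef]
          push_cast
          ring)
      rw [hsplit, Matrix.mul_add, Matrix.add_mul, Matrix.mul_one, hQQ]
      congr 1
      rw [Matrix.mul_smul, Matrix.smul_mul]
    rw [hmain, det_gram (M - (i : ℕ)) M x hx0 Q, Complex.ofReal_re]
    have hnorm : (∑ s ∈ (Finset.univ.powersetCard (M - (i : ℕ))).attach,
        Complex.normSq ((Q.submatrix (s.1.orderEmbOfFin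
          (Finset.mem_powersetCard_univ.mp s.2)) id).det)) = 1 := by
      have h1 := det_gram (M - (i : ℕ)) M (fun _ => 1) (fun _ => zero_le_one) Q
      rw [show Matrix.diagonal (fun k : Fin M => (((1:ℝ) : ℝ) : ℂ)) = 1 by
        simp] at h1
      rw [Matrix.mul_one, hQQ, Matrix.det_one] at h1
      have h2 := h1.symm
      rw [Complex.ofReal_eq_one] at h2
      simpa using h2
    calc (∑ s ∈ (Finset.univ.powersetCard (M - (i : ℕ))).attach,
          (∏ k ∈ s.1, x k) * Complex.normSq ((Q.submatrix (s.1.orderEmbOfFin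
            (Finset.mem_powersetCard_univ.mp s.2)) id).det))
        ≤ ∑ s ∈ (Finset.univ.powersetCard (M - (i : ℕ))).attach,
          (∏ k ∈ Finset.univ.filter (fun k : Fin M => i ≤ k), x k) *
            Complex.normSq ((Q.submatrix (s.1.orderEmbOfFin
              (Finset.mem_powersetCard_univ.mp s.2)) id).det) := by
          refine Finset.sum_le_sum fun s _ => ?_
          exact mul_le_mul_of_nonneg_right
            (prod_subset_le_top M i x hx1 hxmono s.1
              (Finset.mem_powersetCard_univ.mp s.2))
            (Complex.normSq_nonneg _)
      _ = (∏ k ∈ Finset.univ.filter (fun k : Fin M => i ≤ k), x k) *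
          ∑ s ∈ (Finset.univ.powersetCard (M - (i : ℕ))).attach,
            Complex.normSq ((Q.submatrix (s.1.orderEmbOfFin
              (Finset.mem_powersetCard_univ.mp s.2)) id).det) := by
          rw [Finset.mul_sum]
      _ = ∏ k ∈ Finset.univ.filter (fun k : Fin M => i ≤ k), (1 + c * σ k ^ 2) := by
          rw [hnorm, mul_one]
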